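/- arXiv:1412.3518 — 5 statements merged into one kernel-verified Lean document; each statement's English description precedes it below -/
import Mathlib

section
/- If M' is a conservative extension of a recursive causal model M with endogenous variables V, then for every context u, every subset W of V, every setting w of W, every variable X in V, and every value x, the formula [W ← w](X = x) holds in (M, u) if and only if it holds in (M', u). (That is, the basic definition of conservative extension, which quantifies only over settings of all variables in V other than X, implies agreement on interventions on arbitrary subsets of V.) -/
open Classical

/-- A causal model over variable namespace ℕ (values are also coded as ℕ).
`V` is the finite set of endogenous variables; `F X ctx g` gives the value of the
structural equation for `X` given a context `ctx` (assignment to the exogenous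
variables) and an assignment `g` to the endogenous variables. -/
structure CM where
  V : Finset ℕ
  F : ℕ → (ℕ → ℕ) → (ℕ → ℕ) → ℕ

/-- `v` is a solution of all the structural equations of `M` in context `ctx`
(pinned to `0` outside `V` so that worlds are canonical). -/
def IsSol (M : CM) (ctx v : ℕ → ℕ) : Prop :=
  (∀ X ∈ M.V, v X = M.F X ctx v) ∧ ∀ X, X ∉ M.V → v X = 0

/-- `M` is recursive (acyclic): there is a total order on `V` such that each
equation depends only on strictly earlier endogenous variables. -/
def Recursive (M : CM) : Prop :=
  ∃ ord : ℕ → ℕ, Set.InjOn ord ↑M.V ∧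
    ∀ X ∈ M.V, ∀ ctx g h, (∀ Y ∈ M.V, ord Y < ord X → g Y = h Y) →
      M.F X ctx g = M.F X ctx h

/-- The model obtained by intervening according to the partial assignment `I`. -/
def CM.intervene (M : CM) (I : ℕ → Option ℕ) : CM :=
  ⟨M.V, fun X ctx g => (I X).getD (M.F X ctx g)⟩

/-- The intervention setting the variables in `S` to the values given by `f`. -/
def doSet (S : Finset ℕ) (f : ℕ → ℕ) : ℕ → Option ℕ :=
  fun Y => if Y ∈ S then some (f Y) else none

/-- `(M, ctx) ⊨ [I](X = x)`. -/
def Sat (M : CM) (ctx : ℕ → ℕ) (I : ℕ → Option ℕ) (X x : ℕ) : Prop :=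
  ∀ v, IsSol (M.intervene I) ctx v → v X = x

/-- Boolean combinations of primitive events `X = x`. -/
inductive BForm where
  | prim : ℕ → ℕ → BForm
  | not : BForm → BForm
  | and : BForm → BForm → BForm

def BForm.eval (v : ℕ → ℕ) : BForm → Prop
  | .prim X x => v X = x
  | .not φ => ¬ BForm.eval v φ
  | .and φ ψ => BForm.eval v φ ∧ BForm.eval v ψ

def BForm.vars : BForm → Finset ℕ
  | .prim X _ => {X}
  | .not φ => φ.vars
  | .and φ ψ => φ.vars ∪ ψ.vars

/-- `(M, ctx) ⊨ [I]φ`. -/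
def SatF (M : CM) (ctx : ℕ → ℕ) (I : ℕ → Option ℕ) (φ : BForm) : Prop :=
  ∀ v, IsSol (M.intervene I) ctx v → φ.eval v

/-- `M'` is a conservative extension of `M`: same exogenous variables (shared
namespace), `M.V ⊆ M'.V`, and for every context, every `X ∈ M.V`, and every
setting of the other variables of `M`, the intervened value of `X` agrees. -/
def ConsExt (M M' : CM) : Prop :=
  M.V ⊆ M'.V ∧
  ∀ ctx x, ∀ X ∈ M.V, ∀ w : ℕ → ℕ,
    (Sat M ctx (doSet (M.V.erase X) w) X x ↔ Sat M' ctx (doSet (M.V.erase X) w) X x)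

/-- The intervention `X⃗ ← x⃗', W⃗ ← w⃗` used in AC2(a). -/
def witI (Xs : Finset ℕ) (x' : ℕ → ℕ) (W : Finset ℕ) (w : ℕ → ℕ) : ℕ → Option ℕ :=
  fun Y => if Y ∈ Xs then some (x' Y) else if Y ∈ W then some (w Y) else none

/-- The intervention `X⃗ ← x⃗, Z⃗' ← z⃗, W⃗' ← w⃗` used in AC2(b) (here `vs` is the
actual solution, providing the actual values `z⃗`). -/
def acbI (Xs : Finset ℕ) (xv : ℕ → ℕ) (Z' : Finset ℕ) (vs : ℕ → ℕ)
    (W' : Finset ℕ) (w : ℕ → ℕ) : ℕ → Option ℕ :=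
  fun Y => if Y ∈ Xs then some (xv Y) else if Y ∈ Z' then some (vs Y)
    else if Y ∈ W' then some (w Y) else none

/-- `(W, w, x')` is a witness for AC2 (updated version, with AC2(b)). -/
def Wit (M : CM) (ctx : ℕ → ℕ) (Xs : Finset ℕ) (xv : ℕ → ℕ) (φ : BForm)
    (W : Finset ℕ) (w x' : ℕ → ℕ) : Prop :=
  W ⊆ M.V ∧ Xs ⊆ M.V \ W ∧
  SatF M ctx (witI Xs x' W w) (BForm.not φ) ∧
  ∀ vs, IsSol M ctx vs → ∀ W' ⊆ W, ∀ Z' ⊆ M.V \ W,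
    SatF M ctx (acbI Xs xv Z' vs W' w) φ

/-- `(W, w, x')` is a witness for AC2 in the original HP sense (with AC2(b'):
only `W` itself, not its subsets, is set to `w`). -/
def Wit' (M : CM) (ctx : ℕ → ℕ) (Xs : Finset ℕ) (xv : ℕ → ℕ) (φ : BForm)
    (W : Finset ℕ) (w x' : ℕ → ℕ) : Prop :=
  W ⊆ M.V ∧ Xs ⊆ M.V \ W ∧
  SatF M ctx (witI Xs x' W w) (BForm.not φ) ∧
  ∀ vs, IsSol M ctx vs → ∀ Z' ⊆ M.V \ W,
    SatF M ctx (acbI Xs xv Z' vs W w) φ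

/-- AC1: `X⃗ = x⃗` and `φ` hold in the actual world. -/
def AC1 (M : CM) (ctx : ℕ → ℕ) (Xs : Finset ℕ) (xv : ℕ → ℕ) (φ : BForm) : Prop :=
  ∀ v, IsSol M ctx v → (∀ X ∈ Xs, v X = xv X) ∧ φ.eval v

def PreCause (M : CM) (ctx : ℕ → ℕ) (Xs : Finset ℕ) (xv : ℕ → ℕ) (φ : BForm) : Prop :=
  AC1 M ctx Xs xv φ ∧ ∃ W w x', Wit M ctx Xs xv φ W w x'

/-- The (updated) HP definition of actual cause: AC1 ∧ AC2 ∧ AC3. -/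
def IsCause (M : CM) (ctx : ℕ → ℕ) (Xs : Finset ℕ) (xv : ℕ → ℕ) (φ : BForm) : Prop :=
  PreCause M ctx Xs xv φ ∧ ∀ Xs' ⊂ Xs, ¬ PreCause M ctx Xs' xv φ

def PreCause' (M : CM) (ctx : ℕ → ℕ) (Xs : Finset ℕ) (xv : ℕ → ℕ) (φ : BForm) : Prop :=
  AC1 M ctx Xs xv φ ∧ ∃ W w x', Wit' M ctx Xs xv φ W w x'

/-- The original HP definition of actual cause (with AC2(b')). -/
def IsCause' (M : CM) (ctx : ℕ → ℕ) (Xs : Finset ℕ) (xv : ℕ → ℕ) (φ : BForm) : Prop :=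
  PreCause' M ctx Xs xv φ ∧ ∀ Xs' ⊂ Xs, ¬ PreCause' M ctx Xs' xv φ

/-- An extended causal model: a causal model with a normality preorder on worlds. -/
structure ECM extends CM where
  normGE : (ℕ → ℕ) → (ℕ → ℕ) → Prop
  normGE_refl : ∀ s, normGE s s
  normGE_trans : ∀ s t u, normGE s t → normGE t u → normGE s u

/-- A world of `M`: an assignment to the endogenous variables (canonically `0` elsewhere). -/
def World (M : CM) (s : ℕ → ℕ) : Prop := ∀ X, X ∉ M.V → s X = 0

/-- The world determined by the intervention `I` in context `ctx` is at least as
normal as the actual world `s_ctx`. -/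
def NormAbove (M : ECM) (ctx : ℕ → ℕ) (I : ℕ → Option ℕ) : Prop :=
  ∀ s su, IsSol (M.toCM.intervene I) ctx s → IsSol M.toCM ctx su → M.normGE s su

/-- Witness for the extended HP definition: AC2 together with AC2(a⁺). -/
def EWit (M : ECM) (ctx : ℕ → ℕ) (Xs : Finset ℕ) (xv : ℕ → ℕ) (φ : BForm)
    (W : Finset ℕ) (w x' : ℕ → ℕ) : Prop :=
  Wit M.toCM ctx Xs xv φ W w x' ∧ NormAbove M ctx (witI Xs x' W w)

def EPreCause (M : ECM) (ctx : ℕ → ℕ) (Xs : Finset ℕ) (xv : ℕ → ℕ) (φ : BForm) : Prop :=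
  AC1 M.toCM ctx Xs xv φ ∧ ∃ W w x', EWit M ctx Xs xv φ W w x'

/-- The extended (normality-sensitive) HP definition of actual cause. -/
def EIsCause (M : ECM) (ctx : ℕ → ℕ) (Xs : Finset ℕ) (xv : ℕ → ℕ) (φ : BForm) : Prop :=
  EPreCause M ctx Xs xv φ ∧ ∀ Xs' ⊂ Xs, ¬ EPreCause M ctx Xs' xv φ

/-- In world `s`, variable `v0` takes on a value other than that specified by
the equations of `M` in context `ctx`. -/
def Deviates (M : CM) (ctx : ℕ → ℕ) (v0 : ℕ) (s : ℕ → ℕ) : Prop :=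
  ∀ v, IsSol (M.intervene (doSet (M.V.erase v0) s)) ctx v → v v0 ≠ s v0

/-- `(M, ctx)` respects the equations for `v0`: any world in which `v0` deviates
from its equation-determined value is not at least as normal as the actual world. -/
def Respects (M : ECM) (ctx : ℕ → ℕ) (v0 : ℕ) : Prop :=
  ∀ s, World M.toCM s → Deviates M.toCM ctx v0 s →
    ∀ su, IsSol M.toCM ctx su → ¬ M.normGE s su

/-- Conservative extension of extended causal models: conservative extension of
the underlying models plus condition CE on the normality preorders. -/
def EConsExt (M M' : ECM) : Prop :=
  ConsExt M.toCM M'.toCM ∧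
  ∀ ctx (W : Finset ℕ), W ⊆ M.V → ∀ w : ℕ → ℕ,
    (NormAbove M ctx (doSet W w) ↔ NormAbove M' ctx (doSet W w))

/-- Indicator of a proposition, used to express Boolean structural equations. -/
noncomputable def bI (p : Prop) : ℕ := if p then 1 else 0

lemma recursive_intervene {M : CM} (hM : Recursive M) (I : ℕ → Option ℕ) :
    Recursive (M.intervene I) := by
  obtain ⟨ord, hinj, hdep⟩ := hM
  refine ⟨ord, hinj, ?_⟩
  intro X hX ctx g g' hgh
  show (I X).getD (M.F X ctx g) = (I X).getD (M.F X ctx g')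
  cases hI : I X with
  | none => simpa using hdep X hX ctx g g' hgh
  | some a => rfl

lemma exists_sol {M : CM} (hM : Recursive M) (ctx : ℕ → ℕ) : ∃ v, IsSol M ctx v := by
  obtain ⟨ord, hinj, hdep⟩ := hM
  classical
  set T : (ℕ → ℕ) → (ℕ → ℕ) := fun g X => if X ∈ M.V then M.F X ctx g else 0 with hT
  set z : ℕ → ℕ := fun _ => 0 with hz
  have stab : ∀ n, ∀ m, n ≤ m → ∀ X ∈ M.V, ord X < n → T^[m] z X = T^[n] z X := by
    intro n
    induction n using Nat.strong_induction_on with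
    | _ n ih =>
      intro m hnm X hX hord
      rcases n with _ | n'
      · omega
      rcases m with _ | m'
      · omega
      have hnm' : n' ≤ m' := by omega
      rw [Function.iterate_succ_apply', Function.iterate_succ_apply']
      have hTX : ∀ g, T g X = M.F X ctx g := fun g => by simp [hT, hX]
      rw [hTX, hTX]
      refine hdep X hX ctx _ _ (fun Y hY hYord => ?_)
      have hYn : ord Y < n' := by omega
      have e1 : T^[m'] z Y = T^[ord Y + 1] z Y :=
        ih (ord Y + 1) (by omega) m' (by omega) Y hY (by omega)
      have e2 : T^[n'] z Y = T^[ord Y + 1] z Y :=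
        ih (ord Y + 1) (by omega) n' (by omega) Y hY (by omega)
      rw [e1, e2]
  set N : ℕ := (M.V.sup ord) + 1 with hN
  refine ⟨T^[N] z, ?_, ?_⟩
  · intro X hX
    have hordN : ord X < N := by
      have := Finset.le_sup (f := ord) hX
      omega
    have h1 : T^[N+1] z X = M.F X ctx (T^[N] z) := by
      rw [Function.iterate_succ_apply']; simp [hT, hX]
    have h2 : T^[N+1] z X = T^[ord X + 1] z X := stab (ord X + 1) (N+1) (by omega) X hX (by omega)
    have h3 : T^[N] z X = T^[ord X + 1] z X := stab (ord X + 1) N (by omega) X hX (by omega)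
    rw [h3, ← h2, h1]
  · intro X hX
    have : N = (M.V.sup ord) + 1 := hN
    rw [show N = (M.V.sup ord) + 1 from hN, Function.iterate_succ_apply']
    simp [hT, hX]

lemma sol_unique {M : CM} (hM : Recursive M) (ctx v v' : ℕ → ℕ)
    (h : IsSol M ctx v) (h' : IsSol M ctx v') : ∀ X, v X = v' X := by
  obtain ⟨ord, hinj, hdep⟩ := hM
  have key : ∀ n, ∀ X ∈ M.V, ord X = n → v X = v' X := by
    intro n
    induction n using Nat.strong_induction_on with
    | _ n ih =>
      intro X hX hord
      rw [h.1 X hX, h'.1 X hX]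
      exact hdep X hX ctx v v' (fun Y hY hYord => ih (ord Y) (by omega) Y hY rfl)
  intro X
  by_cases hX : X ∈ M.V
  · exact key (ord X) X hX rfl
  · rw [h.2 X hX, h'.2 X hX]

/-- a conservative extension agrees with the original model on
interventions on arbitrary subsets of the original endogenous variables. -/
theorem consExt_arbitrary_subsets (M M' : CM) (hM : Recursive M) (hM' : Recursive M')
    (h : ConsExt M M') (ctx : ℕ → ℕ) (W : Finset ℕ) (hW : W ⊆ M.V) (w : ℕ → ℕ)
    (X : ℕ) (hX : X ∈ M.V) (x : ℕ) :
    Sat M ctx (doSet W w) X x ↔ Sat M' ctx (doSet W w) X x := by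
  classical
  obtain ⟨hsub, hce⟩ := h
  have hMrec := hM
  have hM'rec := hM'
  obtain ⟨ord, hinj, hdep⟩ := hM
  obtain ⟨ord', hinj', hdep'⟩ := hM'
  obtain ⟨v, hv⟩ := exists_sol (recursive_intervene hMrec (doSet W w)) ctx
  obtain ⟨v', hv'⟩ := exists_sol (recursive_intervene hM'rec (doSet W w)) ctx
  -- basic facts about v
  have hvW : ∀ Y ∈ W, v Y = w Y := by
    intro Y hY
    have := hv.1 Y (hW hY)
    simpa [CM.intervene, doSet, hY] using this
  have hvF : ∀ Y ∈ M.V, Y ∉ W → v Y = M.F Y ctx v := by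
    intro Y hYV hYW
    have := hv.1 Y hYV
    simpa [CM.intervene, doSet, hYW] using this
  have hv'W : ∀ Y ∈ W, v' Y = w Y := by
    intro Y hY
    have := hv'.1 Y (hsub (hW hY))
    simpa [CM.intervene, doSet, hY] using this
  have hv'F : ∀ Y ∈ M'.V, Y ∉ W → v' Y = M'.F Y ctx v' := by
    intro Y hYV hYW
    have := hv'.1 Y hYV
    simpa [CM.intervene, doSet, hYW] using this
  -- key claim: v' agrees with v on M.V
  have key : ∀ n, ∀ Z ∈ M.V, ord' Z = n → v' Z = v Z := by
    intro n
    induction n using Nat.strong_induction_on with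
    | _ n ihn =>
      intro Z hZM hordZ
      by_cases hZW : Z ∈ W
      · rw [hv'W Z hZW, hvW Z hZW]
      · set J : ℕ → Option ℕ := doSet (M.V.erase Z) v with hJ
        obtain ⟨u, hu⟩ := exists_sol (recursive_intervene hM'rec J) ctx
        have hJZ : J Z = none := by simp [hJ, doSet]
        -- (M,ctx) ⊨ [J](Z = v Z)
        have hSatM : Sat M ctx J Z (v Z) := by
          intro s hs
          have hsV : ∀ Y ∈ M.V, Y ≠ Z → s Y = v Y := by
            intro Y hY hYZ
            have hYe : Y ∈ M.V.erase Z := Finset.mem_erase.mpr ⟨hYZ, hY⟩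
            have := hs.1 Y hY
            simpa [CM.intervene, hJ, doSet, hYZ, hY] using this
          have hsZ : s Z = M.F Z ctx s := by
            have := hs.1 Z hZM
            simpa [CM.intervene, hJZ] using this
          rw [hsZ]
          have heq : M.F Z ctx s = M.F Z ctx v :=
            hdep Z hZM ctx s v (fun Y hY hYord => hsV Y hY (fun hYZ => by
              rw [hYZ] at hYord; omega))
          rw [heq, ← hvF Z hZM hZW]
        have hSatM' : Sat M' ctx J Z (v Z) := (hce ctx (v Z) Z hZM v).mp hSatM
        have huZ : u Z = v Z := hSatM' u hu
        -- u and v' agree on all variables of M' earlier (in ord') than Z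
        have inner : ∀ m, m < n → ∀ T ∈ M'.V, ord' T = m → u T = v' T := by
          intro m
          induction m using Nat.strong_induction_on with
          | _ m ihm =>
            intro hmn T hTM' hordT
            by_cases hTM : T ∈ M.V
            · have hTZ : T ≠ Z := fun hTZ => by rw [hTZ, hordZ] at hordT; omega
              have hTe : T ∈ M.V.erase Z := Finset.mem_erase.mpr ⟨hTZ, hTM⟩
              have huT : u T = v T := by
                have := hu.1 T hTM'
                simpa [CM.intervene, hJ, doSet, hTZ, hTM] using this
              rw [huT, ihn m hmn T hTM hordT]
            · have hTW : T ∉ W := fun hTW => hTM (hW hTW)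
              have hJT : J T = none := by
                simp [hJ, doSet, Finset.mem_erase, hTM]
              have h1 : u T = M'.F T ctx u := by
                have := hu.1 T hTM'
                simpa [CM.intervene, hJT] using this
              have h2 : v' T = M'.F T ctx v' := hv'F T hTM' hTW
              rw [h1, h2]
              exact hdep' T hTM' ctx u v' (fun Y hY hYord =>
                ihm (ord' Y) (by omega) (by omega) Y hY rfl)
        have h1 : u Z = M'.F Z ctx u := by
          have := hu.1 Z (hsub hZM)
          simpa [CM.intervene, hJZ] using this
        have h2 : v' Z = M'.F Z ctx v' := hv'F Z (hsub hZM) hZW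
        have h3 : M'.F Z ctx v' = M'.F Z ctx u :=
          hdep' Z (hsub hZM) ctx v' u (fun Y hY hYord =>
            (inner (ord' Y) (by omega) Y hY rfl).symm)
        rw [h2, h3, ← h1, huZ]
  have hkey : v' X = v X := key (ord' X) X hX rfl
  constructor
  · intro hs s hsSol
    have : s X = v' X :=
      sol_unique (recursive_intervene hM'rec (doSet W w)) ctx s v' hsSol hv' X
    rw [this, hkey, hs v hv]
  · intro hs s hsSol
    have : s X = v X :=
      sol_unique (recursive_intervene hMrec (doSet W w)) ctx s v hsSol hv X
    rw [this, ← hkey, hs v' hv']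
end

section
/- If M' is a conservative extension of a recursive causal model M with endogenous variables V, then for every context u and every causal formula φ that mentions only variables in V, (M, u) ⊨ φ if and only if (M', u) ⊨ φ. -/
open Classical

/-- Iterated approximation used to construct the unique solution of a
recursive model. -/
noncomputable def approxV (M : CM) (ord ctx : ℕ → ℕ) : ℕ → ℕ → ℕ
  | n, X => if h : X ∈ M.V ∧ ord X < n then
      M.F X ctx (approxV M ord ctx (ord X)) else 0
termination_by n => n
decreasing_by exact h.2

lemma approxV_pos (M : CM) (ord ctx : ℕ → ℕ) {n X : ℕ}
    (hX : X ∈ M.V) (hn : ord X < n) :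
    approxV M ord ctx n X = M.F X ctx (approxV M ord ctx (ord X)) := by
  rw [approxV]; simp [hX, hn]

lemma approxV_neg (M : CM) (ord ctx : ℕ → ℕ) {n X : ℕ} (hX : X ∉ M.V) :
    approxV M ord ctx n X = 0 := by
  rw [approxV]; simp [hX]

lemma isSol_unique (M : CM) (hM : Recursive M) (ctx v1 v2 : ℕ → ℕ)
    (h1 : IsSol M ctx v1) (h2 : IsSol M ctx v2) : v1 = v2 := by
  obtain ⟨ord, _, hdep⟩ := hM
  have key : ∀ n X, ord X < n → v1 X = v2 X := by
    intro n
    induction n with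
    | zero => intro X h; omega
    | succ n ih =>
      intro X h
      by_cases hX : X ∈ M.V
      · rw [h1.1 X hX, h2.1 X hX]
        exact hdep X hX ctx v1 v2 (fun Y _ hlt => ih Y (by omega))
      · rw [h1.2 X hX, h2.2 X hX]
  funext X; exact key (ord X + 1) X (Nat.lt_succ_self _)

lemma rec_existsUnique (M : CM) (hM : Recursive M) (ctx : ℕ → ℕ) :
    ∃! v, IsSol M ctx v := by
  obtain ⟨ord, hinj, hdep⟩ := id hM
  set v : ℕ → ℕ := fun X => approxV M ord ctx (ord X + 1) X with hv
  have hsol : IsSol M ctx v := by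
    constructor
    · intro X hX
      have h1 : v X = M.F X ctx (approxV M ord ctx (ord X)) :=
        approxV_pos M ord ctx hX (Nat.lt_succ_self _)
      rw [h1]
      refine hdep X hX ctx _ _ (fun Y hY hlt => ?_)
      rw [approxV_pos M ord ctx hY hlt]
      exact (approxV_pos M ord ctx hY (Nat.lt_succ_self _)).symm
    · intro X hX; exact approxV_neg M ord ctx hX
  exact ⟨v, hsol, fun u hu => isSol_unique M hM ctx u v hu hsol⟩

lemma intervene_recursive (M : CM) (I : ℕ → Option ℕ) (hM : Recursive M) :
    Recursive (M.intervene I) := by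
  obtain ⟨ord, hinj, hdep⟩ := hM
  refine ⟨ord, hinj, fun X hX ctx g g' hgh => ?_⟩
  show (I X).getD (M.F X ctx g) = (I X).getD (M.F X ctx g')
  rw [hdep X hX ctx g g' hgh]

lemma eval_congr (φ : BForm) (v1 v2 : ℕ → ℕ)
    (h : ∀ X ∈ φ.vars, v1 X = v2 X) : φ.eval v1 ↔ φ.eval v2 := by
  induction φ with
  | prim X x =>
    simp only [BForm.eval, h X (by simp [BForm.vars])]
  | not φ ih =>
    exact not_congr (ih (fun X hX => h X hX))
  | and φ ψ ihφ ihψ =>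
    exact and_congr (ihφ (fun X hX => h X (by simp [BForm.vars, hX])))
      (ihψ (fun X hX => h X (by simp [BForm.vars, hX])))

/-- a conservative extension agrees with the original model on all
causal formulas mentioning only the original endogenous variables. -/
theorem consExt_causal_formulas (M M' : CM) (hM : Recursive M) (hM' : Recursive M')
    (h : ConsExt M M') (ctx : ℕ → ℕ) (W : Finset ℕ) (hW : W ⊆ M.V) (w : ℕ → ℕ)
    (φ : BForm) (hφ : φ.vars ⊆ M.V) :
    SatF M ctx (doSet W w) φ ↔ SatF M' ctx (doSet W w) φ := by
  obtain ⟨ord, hinj, hdep⟩ := id hM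
  obtain ⟨v', hv', _⟩ := rec_existsUnique _ (intervene_recursive M' (doSet W w) hM') ctx
  -- Key: v' satisfies the *original* equations of M off W.
  have step : ∀ X ∈ M.V, X ∉ W → v' X = M.F X ctx v' := by
    intro X hX hXW
    -- v' solves M' intervened by setting all other M-variables to their v'-values
    have hsolM' : IsSol (M'.intervene (doSet (M.V.erase X) v')) ctx v' := by
      constructor
      · intro Y hY
        show v' Y = ((doSet (M.V.erase X) v') Y).getD (M'.F Y ctx v')
        by_cases hYe : Y ∈ M.V.erase X
        · simp [doSet, hYe]
        · have hYW : Y ∉ W := fun hw =>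
            hYe (Finset.mem_erase.mpr ⟨fun he => hXW (he ▸ hw), hW hw⟩)
          have h1 := hv'.1 Y hY
          simp only [CM.intervene, doSet, hYe, if_neg hYW, Option.getD_none,
            if_neg hYe] at h1 ⊢
          exact h1
      · exact hv'.2
    have hSat' : Sat M' ctx (doSet (M.V.erase X) v') X (v' X) := by
      intro t ht
      have : t = v' :=
        isSol_unique _ (intervene_recursive M' _ hM') ctx t v' ht hsolM'
      rw [this]
    have hSat : Sat M ctx (doSet (M.V.erase X) v') X (v' X) :=
      (h.2 ctx (v' X) X hX v').mpr hSat'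
    obtain ⟨s, hs, _⟩ :=
      rec_existsUnique _ (intervene_recursive M (doSet (M.V.erase X) v') hM) ctx
    have hsX : s X = v' X := hSat s hs
    have hXe : X ∉ M.V.erase X := Finset.notMem_erase X M.V
    have hs1 : s X = M.F X ctx s := by
      have h1 := hs.1 X hX
      simpa [CM.intervene, doSet, hXe] using h1
    have h2 : M.F X ctx s = M.F X ctx v' := by
      refine hdep X hX ctx s v' (fun Y hY hlt => ?_)
      have hYX : Y ≠ X := fun e => by subst e; exact lt_irrefl _ hlt
      have hYe : Y ∈ M.V.erase X := Finset.mem_erase.mpr ⟨hYX, hY⟩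
      have h1 := hs.1 Y hY
      simpa [CM.intervene, doSet, hYX, hY] using h1
    calc v' X = s X := hsX.symm
      _ = M.F X ctx s := hs1
      _ = M.F X ctx v' := h2
  -- The restriction of v' to M.V solves M intervened.
  set u : ℕ → ℕ := fun Y => if Y ∈ M.V then v' Y else 0 with hu_def
  have hu : IsSol (M.intervene (doSet W w)) ctx u := by
    constructor
    · intro Y hY
      have hYV : Y ∈ M.V := hY
      show u Y = ((doSet W w) Y).getD (M.F Y ctx u)
      by_cases hYW : Y ∈ W
      · have h1 := hv'.1 Y (h.1 hYV)
        simp only [CM.intervene, doSet, if_pos hYW, Option.getD_some] at h1 ⊢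
        simp [hu_def, hYV, h1]
      · simp only [doSet, if_neg hYW, Option.getD_none, hu_def, if_pos hYV]
        rw [step Y hYV hYW]
        exact hdep Y hYV ctx v' _ (fun Z hZ _ => by simp [hZ])
    · intro Y hY
      have hYV : Y ∉ M.V := hY
      simp [hu_def, hYV]
  constructor
  · intro hS t ht
    have ht' : t = v' :=
      isSol_unique _ (intervene_recursive M' _ hM') ctx t v' ht hv'
    have heu : φ.eval u := hS u hu
    rw [ht']
    exact (eval_congr φ u v' (fun X hXφ => by simp [hu_def, hφ hXφ])).mp heu
  · intro hS t ht
    have ht' : t = u :=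
      isSol_unique _ (intervene_recursive M _ hM) ctx t u ht hu
    rw [ht']
    have hev' : φ.eval v' := hS v' hv'
    exact (eval_congr φ u v' (fun X hXφ => by simp [hu_def, hφ hXφ])).mpr hev'
end

section
/- In the refined rock-throwing model M'_RT with binary endogenous variables ST, BT, SH, BH, BS, equations SH = ST, BH = BT ∧ ¬SH, BS = SH ∨ BH, and the context u in which ST = BT = 1: ST = 1 is an actual cause of BS = 1, but BT = 1 is not an actual cause of BS = 1, according to the HP definition. -/
open Classical

/-- The refined rock-throwing model: ST = 0, BT = 1, BS = 2, SH = 3, BH = 4;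
SH = ST, BH = BT ∧ ¬SH, BS = SH ∨ BH. -/
noncomputable def MRT' : CM :=
  ⟨{0, 1, 2, 3, 4}, fun X ctx g =>
    if X = 3 then g 0
    else if X = 4 then bI (g 1 = 1 ∧ g 3 = 0)
    else if X = 2 then bI (g 3 = 1 ∨ g 4 = 1)
    else ctx 0⟩

-- auxiliary lemmas
lemma bI_eq_one {p : Prop} : bI p = 1 ↔ p := by
  by_cases hp : p <;> simp [bI, hp]

lemma bI_ne_one {p : Prop} : bI p ≠ 1 ↔ ¬ p := by simp [bI_eq_one]

/-- Explicit solution of any intervened refined rock-throwing model. -/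
noncomputable def solOf (ctx : ℕ → ℕ) (I : ℕ → Option ℕ) : ℕ → ℕ :=
  fun X =>
    let a0 := (I 0).getD (ctx 0)
    let a1 := (I 1).getD (ctx 0)
    let a3 := (I 3).getD a0
    let a4 := (I 4).getD (bI (a1 = 1 ∧ a3 = 0))
    let a2 := (I 2).getD (bI (a3 = 1 ∨ a4 = 1))
    if X = 0 then a0 else if X = 1 then a1 else if X = 2 then a2
      else if X = 3 then a3 else if X = 4 then a4 else 0

lemma solOf_0 (ctx I) : solOf ctx I 0 = (I 0).getD (ctx 0) := rfl
lemma solOf_1 (ctx I) : solOf ctx I 1 = (I 1).getD (ctx 0) := rfl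
lemma solOf_3 (ctx I) : solOf ctx I 3 = (I 3).getD (solOf ctx I 0) := rfl
lemma solOf_4 (ctx I) :
    solOf ctx I 4 = (I 4).getD (bI (solOf ctx I 1 = 1 ∧ solOf ctx I 3 = 0)) := rfl
lemma solOf_2 (ctx I) :
    solOf ctx I 2 = (I 2).getD (bI (solOf ctx I 3 = 1 ∨ solOf ctx I 4 = 1)) := rfl

lemma solOf_isSol (ctx : ℕ → ℕ) (I : ℕ → Option ℕ) :
    IsSol (MRT'.intervene I) ctx (solOf ctx I) := by
  constructor
  · intro X hX
    fin_cases hX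
    · exact solOf_0 ctx I
    · exact solOf_1 ctx I
    · exact solOf_2 ctx I
    · exact solOf_3 ctx I
    · exact solOf_4 ctx I
  · intro X hX
    simp only [MRT', CM.intervene, Finset.mem_insert, Finset.mem_singleton, not_or] at hX
    simp [solOf, hX.1, hX.2.1, hX.2.2.1, hX.2.2.2.1, hX.2.2.2.2]

/-- Reading off values from any solution of an intervened model. -/
lemma sol_read {ctx I v} (h : IsSol (MRT'.intervene I) ctx v) :
    v 0 = (I 0).getD (ctx 0) ∧ v 1 = (I 1).getD (ctx 0) ∧
    v 3 = (I 3).getD (v 0) ∧ v 4 = (I 4).getD (bI (v 1 = 1 ∧ v 3 = 0)) ∧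
    v 2 = (I 2).getD (bI (v 3 = 1 ∨ v 4 = 1)) := by
  obtain ⟨h1, -⟩ := h
  have e0 := h1 0 (by simp [MRT', CM.intervene])
  have e1 := h1 1 (by simp [MRT', CM.intervene])
  have e2 := h1 2 (by simp [MRT', CM.intervene])
  have e3 := h1 3 (by simp [MRT', CM.intervene])
  have e4 := h1 4 (by simp [MRT', CM.intervene])
  simp only [MRT', CM.intervene] at e0 e1 e2 e3 e4
  norm_num at e0 e1 e2 e3 e4
  exact ⟨e0, e1, e3, e4, e2⟩

lemma isSol_iff_none (ctx v) :
    IsSol MRT' ctx v ↔ IsSol (MRT'.intervene (fun _ => none)) ctx v := by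
  simp [IsSol, CM.intervene]

section RRT
noncomputable def ctx1 : ℕ → ℕ := fun _ => 1
noncomputable def vsRT : ℕ → ℕ := solOf ctx1 (fun _ => none)

lemma vsRT_vals : vsRT 0 = 1 ∧ vsRT 1 = 1 ∧ vsRT 3 = 1 ∧ vsRT 4 = 0 ∧ vsRT 2 = 1 := by
  have h0 : vsRT 0 = 1 := rfl
  have h1 : vsRT 1 = 1 := rfl
  have h3 : vsRT 3 = 1 := by
    rw [vsRT, solOf_3, Option.getD_none]; exact h0
  have h4 : vsRT 4 = 0 := by
    rw [vsRT, solOf_4, Option.getD_none,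
      show solOf ctx1 (fun _ => none) 3 = 1 from h3]
    simp [bI]
  have h2 : vsRT 2 = 1 := by
    rw [vsRT, solOf_2, Option.getD_none,
      show solOf ctx1 (fun _ => none) 3 = 1 from h3]
    simp [bI]
  exact ⟨h0, h1, h3, h4, h2⟩

lemma vsRT_isSol : IsSol MRT' ctx1 vsRT := by
  rw [isSol_iff_none]; exact solOf_isSol ctx1 _

/-- Any solution of the unintervened model has the actual values. -/
lemma actual_vals {v} (hv : IsSol MRT' ctx1 v) :
    v 0 = 1 ∧ v 1 = 1 ∧ v 3 = 1 ∧ v 4 = 0 ∧ v 2 = 1 := by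
  rw [isSol_iff_none] at hv
  obtain ⟨e0, e1, e3, e4, e2⟩ := sol_read hv
  simp [ctx1] at e0 e1 e3 e4 e2
  rw [e0] at e3
  rw [e1, e3] at e4
  simp [bI] at e4
  rw [e3, e4] at e2
  simp [bI] at e2
  exact ⟨e0, e1, e3, e4, e2⟩
end RRT

/-- in the refined rock-throwing model, in the context where
ST = BT = 1, ST = 1 is an actual cause of BS = 1 but BT = 1 is not. -/
theorem refined_rock_throwing :
    IsCause MRT' (fun _ => 1) {0} (fun _ => 1) (.prim 2 1) ∧
    ¬ IsCause MRT' (fun _ => 1) {1} (fun _ => 1) (.prim 2 1) := by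
  have hctx : (fun _ => (1:ℕ)) = ctx1 := rfl
  rw [hctx]
  constructor
  · -- ST = 1 is a cause
    constructor
    · constructor
      · -- AC1
        intro v hv
        obtain ⟨e0, -, -, -, e2⟩ := actual_vals hv
        exact ⟨fun X hX => by simp at hX; subst hX; exact e0, e2⟩
      · -- AC2 with witness W = {1}, w = 0, x' = 0
        refine ⟨{1}, fun _ => 0, fun _ => 0, ?_, ?_, ?_, ?_⟩
        · intro x hx; simp at hx; subst hx; simp [MRT']
        · intro x hx; simp at hx; subst hx; simp [MRT']
        · -- AC2(a)
          intro v hv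
          obtain ⟨e0, e1, e3, e4, e2⟩ := sol_read hv
          simp [witI] at e0 e1 e3 e4 e2
          rw [e0] at e3
          rw [e1] at e4
          simp [bI] at e4
          rw [e3, e4] at e2
          simp [bI] at e2
          simp [BForm.eval, e2]
        · -- AC2(b)
          intro vs hvs W' hW' Z' hZ' v hv
          obtain ⟨a0, a1, a3, a4, a2⟩ := actual_vals hvs
          obtain ⟨e0, e1, e3, e4, e2⟩ := sol_read hv
          have h1W : ∀ Y, Y ∈ W' → Y = 1 := fun Y hY => by
            have := hW' hY; simpa using this
          have h3W : 3 ∉ W' := fun h => by simpa using h1W 3 h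
          have h2W : 2 ∉ W' := fun h => by simpa using h1W 2 h
          simp [acbI] at e0
          have v3 : v 3 = 1 := by
            by_cases h3 : 3 ∈ Z'
            · simp [acbI, h3, h3W] at e3; rw [e3, a3]
            · simp [acbI, h3, h3W] at e3; rw [e3, e0]; rfl
          have v2 : v 2 = 1 := by
            by_cases h2 : 2 ∈ Z'
            · simp [acbI, h2, h2W] at e2; rw [e2, a2]
            · simp [acbI, h2, h2W] at e2; rw [e2, bI_eq_one]; exact Or.inl v3
          simpa [BForm.eval] using v2
    · -- AC3
      intro Xs' hss hpc
      have hXs' : Xs' = ∅ := Finset.eq_empty_of_ssubset_singleton hss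
      subst hXs'
      obtain ⟨-, W, w, x', hWV, hXs, ha, hb⟩ := hpc
      have heq : witI ∅ x' W w = acbI ∅ ctx1 ∅ vsRT W w := by
        funext Y; simp [witI, acbI]
      have hsolI := solOf_isSol ctx1 (witI ∅ x' W w)
      have h1 := ha _ hsolI
      have h2 := hb vsRT vsRT_isSol W subset_rfl ∅ (Finset.empty_subset _) _
        (by rw [← heq]; exact hsolI)
      simp [BForm.eval] at h1 h2
      exact h1 h2
  · -- BT = 1 is not a cause
    rintro ⟨⟨-, W, w, x', hWV, hXs, ha, hb⟩, -⟩
    obtain ⟨s0, s1, s3, s4, s2⟩ := vsRT_vals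
    have h1W : 1 ∉ W := by
      have := hXs (Finset.mem_singleton_self 1)
      simp [Finset.mem_sdiff] at this
      exact this.2
    set Z' : Finset ℕ := if 4 ∈ W then ∅ else {4} with hZdef
    have h0Z : 0 ∉ Z' := by by_cases h4 : 4 ∈ W <;> simp [hZdef, h4]
    have h3Z : 3 ∉ Z' := by by_cases h4 : 4 ∈ W <;> simp [hZdef, h4]
    have h2Z : 2 ∉ Z' := by by_cases h4 : 4 ∈ W <;> simp [hZdef, h4]
    have hZ' : Z' ⊆ MRT'.V \ W := by
      by_cases h4 : 4 ∈ W
      · simp [hZdef, h4]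
      · intro Y hY; simp [hZdef, h4] at hY; subst hY
        simp [Finset.mem_sdiff, MRT', h4]
    set Ia := witI {1} x' W w with hIa
    set Ib := acbI {1} ctx1 Z' vsRT W w with hIb
    set va := solOf ctx1 Ia with hva
    set vb := solOf ctx1 Ib with hvb
    have hna : ¬ va 2 = 1 := by
      have := ha va (solOf_isSol ctx1 Ia)
      simpa [BForm.eval] using this
    have hpb : vb 2 = 1 := by
      have := hb vsRT vsRT_isSol W subset_rfl Z' hZ' vb (solOf_isSol ctx1 Ib)
      simpa [BForm.eval] using this
    have eI0 : Ia 0 = Ib 0 := by simp [hIa, hIb, witI, acbI, h0Z]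
    have eI3 : Ia 3 = Ib 3 := by simp [hIa, hIb, witI, acbI, h3Z]
    have e0 : va 0 = vb 0 := by rw [hva, hvb, solOf_0, solOf_0, eI0]
    have e3 : va 3 = vb 3 := by
      rw [hva, hvb, solOf_3, solOf_3, eI3, ← hva, ← hvb, e0]
    by_cases h2 : 2 ∈ W
    · have a2 : va 2 = w 2 := by
        rw [hva, solOf_2]; simp [hIa, witI, h2]
      have b2 : vb 2 = w 2 := by
        rw [hvb, solOf_2]; simp [hIb, acbI, h2, h2Z]
      rw [b2, ← a2] at hpb; exact hna hpb
    · have a2 : va 2 = bI (va 3 = 1 ∨ va 4 = 1) := by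
        rw [hva, solOf_2]; simp [hIa, witI, h2, ← hva]
      have b2 : vb 2 = bI (vb 3 = 1 ∨ vb 4 = 1) := by
        rw [hvb, solOf_2]; simp [hIb, acbI, h2, h2Z, ← hvb]
      rw [a2, bI_eq_one] at hna
      push_neg at hna
      rw [b2, bI_eq_one] at hpb
      rcases hpb with hpb | hpb
      · rw [← e3] at hpb; exact hna.1 hpb
      · by_cases h4 : 4 ∈ W
        · have a4 : va 4 = w 4 := by rw [hva, solOf_4]; simp [hIa, witI, h4]
          have b4 : vb 4 = w 4 := by
            have h4Z : 4 ∉ Z' := by simp [hZdef, h4]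
            rw [hvb, solOf_4]; simp [hIb, acbI, h4, h4Z]
          rw [b4, ← a4] at hpb; exact hna.2 hpb
        · have h4Z : 4 ∈ Z' := by simp [hZdef, h4]
          have b4 : vb 4 = vsRT 4 := by rw [hvb, solOf_4]; simp [hIb, acbI, h4Z]
          rw [b4, s4] at hpb; exact absurd hpb (by norm_num)
end

section
/- In Spohn's model with binary endogenous variables A, B, S, C, where A, B, S are determined by the context, C = (¬S ∧ A) ∨ (S ∧ B), and in context u we have A = B = S = 1 (so C = 1): A = 1 is an actual cause of C = 1 according to the HP definition (with witness W⃗ = {S}, setting S to 0). -/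
open Classical

/-- Spohn's model: A = 0, B = 1, S = 2, C = 3; A, B, S set by the context,
C = (¬S ∧ A) ∨ (S ∧ B). -/
noncomputable def MSp : CM :=
  ⟨{0, 1, 2, 3}, fun X ctx g =>
    if X = 3 then bI ((g 2 = 0 ∧ g 0 = 1) ∨ (g 2 = 1 ∧ g 1 = 1)) else ctx X⟩

lemma msp_sol_val (I : ℕ → Option ℕ) (ctx v : ℕ → ℕ)
    (h : IsSol (MSp.intervene I) ctx v) :
    v 0 = (I 0).getD (ctx 0) ∧ v 1 = (I 1).getD (ctx 1) ∧ v 2 = (I 2).getD (ctx 2) ∧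
    v 3 = (I 3).getD (bI ((v 2 = 0 ∧ v 0 = 1) ∨ (v 2 = 1 ∧ v 1 = 1))) := by
  have h0 := h.1 0 (by simp [MSp, CM.intervene])
  have h1 := h.1 1 (by simp [MSp, CM.intervene])
  have h2 := h.1 2 (by simp [MSp, CM.intervene])
  have h3 := h.1 3 (by simp [MSp, CM.intervene])
  simp [MSp, CM.intervene] at h0 h1 h2 h3
  exact ⟨h0, h1, h2, h3⟩

noncomputable def mspCanon (I : ℕ → Option ℕ) (ctx : ℕ → ℕ) : ℕ → ℕ :=
  fun X =>
    if X = 0 then (I 0).getD (ctx 0)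
    else if X = 1 then (I 1).getD (ctx 1)
    else if X = 2 then (I 2).getD (ctx 2)
    else if X = 3 then (I 3).getD (bI (((I 2).getD (ctx 2) = 0 ∧ (I 0).getD (ctx 0) = 1) ∨
      ((I 2).getD (ctx 2) = 1 ∧ (I 1).getD (ctx 1) = 1)))
    else 0

lemma msp_canon_sol (I : ℕ → Option ℕ) (ctx : ℕ → ℕ) :
    IsSol (MSp.intervene I) ctx (mspCanon I ctx) := by
  constructor
  · intro X hX
    fin_cases hX <;> simp [MSp, CM.intervene, mspCanon]
  · intro X hX
    simp [MSp, CM.intervene] at hX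
    simp [mspCanon, hX.1, hX.2.1, hX.2.2.1, hX.2.2.2]

lemma msp_nopre_empty : ¬ PreCause MSp (fun _ => 1) ∅ (fun _ => 1) (.prim 3 1) := by
  rintro ⟨_, W, w, x', hW, _, hna, hb⟩
  -- the actual solution
  have hact : IsSol MSp (fun _ => 1) (mspCanon (fun _ => none) (fun _ => 1)) :=
    msp_canon_sol (fun _ => none) (fun _ => 1)
  have hb' := hb _ hact W (by rfl) ∅ (Finset.empty_subset _)
  have heq : acbI ∅ (fun _ => 1) ∅ (mspCanon (fun _ => none) (fun _ => 1)) W w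
      = witI ∅ x' W w := by
    funext Y; simp [acbI, witI]
  rw [heq] at hb'
  have hsol := msp_canon_sol (witI (∅ : Finset ℕ) x' W w) (fun _ => 1)
  exact (hna _ hsol) (hb' _ hsol)

/-- in Spohn's model, in the context with A = B = S = 1, A = 1 is an
actual cause of C = 1, with witness W⃗ = {S}, S ← 0 (and A ← 0). -/
theorem spohn_A_cause :
    IsCause MSp (fun _ => 1) {0} (fun _ => 1) (.prim 3 1) ∧
    Wit MSp (fun _ => 1) {0} (fun _ => 1) (.prim 3 1) {2} (fun _ => 0) (fun _ => 0) := by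
  have hwit : Wit MSp (fun _ => 1) {0} (fun _ => 1) (.prim 3 1) {2} (fun _ => 0)
      (fun _ => 0) := by
    refine ⟨by simp [MSp], by simp [MSp], ?_, ?_⟩
    · intro v hv
      obtain ⟨h0, h1, h2, h3⟩ := msp_sol_val _ _ _ hv
      simp [witI] at h0 h1 h2 h3
      simp [BForm.eval, h3, h2, h0, bI]
    · intro vs hvs W' hW' Z' hZ' v hv
      have hvs' : IsSol (MSp.intervene fun _ => none) (fun _ => 1) vs := hvs
      obtain ⟨g0, g1, g2, g3⟩ := msp_sol_val _ _ _ hvs'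
      simp at g0 g1 g2 g3
      obtain ⟨h0, h1, h2, h3⟩ := msp_sol_val _ _ _ hv
      have h2Z : 2 ∉ Z' := by
        intro h; have := hZ' h; simp at this
      have h1W : 1 ∉ W' := fun h => by simpa using hW' h
      have h3W : 3 ∉ W' := fun h => by simpa using hW' h
      simp [g0, g1, g2, bI] at g3
      simp [acbI, h2Z, h1W, h3W, g1, g3] at h0 h1 h2 h3
      show v 3 = 1
      by_cases h3Z : 3 ∈ Z'
      · simp [h3Z] at h3; exact h3
      · simp [h3Z] at h3
        by_cases h1Z : 1 ∈ Z' <;> by_cases h2W : 2 ∈ W' <;>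
          simp [h1Z, h2W] at h1 h2 <;> simp [h3, h0, h1, h2, bI]
  refine ⟨⟨⟨?_, {2}, (fun _ => 0), (fun _ => 0), hwit⟩, ?_⟩, hwit⟩
  · intro v hv
    have hv' : IsSol (MSp.intervene fun _ => none) (fun _ => 1) v := hv
    obtain ⟨h0, h1, h2, h3⟩ := msp_sol_val _ _ _ hv'
    simp at h0 h1 h2 h3
    constructor
    · intro X hX; simp at hX; subst hX; exact h0
    · show v 3 = 1
      simp [h0, h1, h2, bI] at h3 ⊢; exact h3
  · intro Xs' hXs'
    rw [Finset.ssubset_singleton_iff] at hXs'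
    subst hXs'
    exact msp_nopre_empty
end

section
/- In the alternating sequence of models M₀, M₁, M₂, ... (defined below) with context u₁: for all n ≥ 0, M_{n+1} is a conservative extension of M_n; A = 1 is not an actual cause of B = 1 in (M_{2n}, u₁); and A = 1 is an actual cause of B = 1 in (M_{2n+1}, u₁). -/
open Classical

/-- Structural equations of the alternating models: A = 0, B = 1, X_j = 2j,
Y_j = 2j + 1; there are `nX` X-variables and `nY` Y-variables (nY = nX for even
models M_{2nX}, nY = nX - 1 for odd models M_{2nY+1}). A and the X_j are set by
the exogenous variable; Y_j = X_j; B is 1 in context u₁ unless (a) A = 0 and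
(X_{nX} = 0 when nY < nX, or X_j = Y_j = 0 for some j ≤ nY), or (b) A = 1 and
X_j ≠ Y_j for some j ≤ nY; and B = 0 in context u₀. -/
noncomputable def Fseq (nX nY : ℕ) : ℕ → (ℕ → ℕ) → (ℕ → ℕ) → ℕ :=
  fun X ctx g =>
    if X = 1 then
      (if ctx 0 = 0 then 0 else
        bI (¬ ((g 0 = 0 ∧ ((nY < nX ∧ g (2 * nX) = 0) ∨
                  ∃ j ∈ Finset.Icc 1 nY, g (2 * j) = 0 ∧ g (2 * j + 1) = 0)) ∨
               (g 0 = 1 ∧ ∃ j ∈ Finset.Icc 1 nY, g (2 * j) ≠ g (2 * j + 1)))))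
    else if X % 2 = 0 then ctx 0
    else g (X - 1)

def Vseq (nX nY : ℕ) : Finset ℕ :=
  {0, 1} ∪ (Finset.Icc 1 nX).image (fun j => 2 * j) ∪
    (Finset.Icc 1 nY).image (fun j => 2 * j + 1)

/-- The model M_{2n}. -/
noncomputable def Meven (n : ℕ) : CM := ⟨Vseq n n, Fseq n n⟩

/-- The model M_{2n+1}. -/
noncomputable def Modd (n : ℕ) : CM := ⟨Vseq (n + 1) n, Fseq (n + 1) n⟩

section AuxDev

def Bcond (nX nY : ℕ) (g : ℕ → ℕ) : Prop :=
  (g 0 = 0 ∧ ((nY < nX ∧ g (2 * nX) = 0) ∨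
      ∃ j ∈ Finset.Icc 1 nY, g (2 * j) = 0 ∧ g (2 * j + 1) = 0)) ∨
  (g 0 = 1 ∧ ∃ j ∈ Finset.Icc 1 nY, g (2 * j) ≠ g (2 * j + 1))

noncomputable def preSol (I : ℕ → Option ℕ) (c : ℕ → ℕ) : ℕ → ℕ :=
  fun X => if X % 2 = 0 then (I X).getD (c 0) else (I X).getD ((I (X - 1)).getD (c 0))

noncomputable def theSol (nX nY : ℕ) (I : ℕ → Option ℕ) (c : ℕ → ℕ) : ℕ → ℕ :=
  fun X => if X ∈ Vseq nX nY then
      (if X = 1 then (I 1).getD (Fseq nX nY 1 c (preSol I c)) else preSol I c X)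
    else 0

lemma mem_Vseq {nX nY X : ℕ} :
    X ∈ Vseq nX nY ↔ (X % 2 = 0 ∧ X ≤ 2 * nX) ∨ (X % 2 = 1 ∧ X ≤ 2 * nY + 1) := by
  simp only [Vseq, Finset.mem_union, Finset.mem_insert, Finset.mem_singleton,
    Finset.mem_image, Finset.mem_Icc]
  constructor
  · rintro ((h | h) | ⟨j, ⟨h1, h2⟩, rfl⟩ | ⟨j, ⟨h1, h2⟩, rfl⟩) <;> omega
  · rintro (⟨h1, h2⟩ | ⟨h1, h2⟩)
    · by_cases h0 : X = 0
      · exact Or.inl (Or.inl (Or.inl h0))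
      · exact Or.inl (Or.inr ⟨X / 2, ⟨by omega, by omega⟩, by omega⟩)
    · by_cases h1' : X = 1
      · exact Or.inl (Or.inl (Or.inr h1'))
      · exact Or.inr ⟨X / 2, ⟨by omega, by omega⟩, by omega⟩

lemma one_mem_Vseq {nX nY : ℕ} : 1 ∈ Vseq nX nY := mem_Vseq.mpr (Or.inr ⟨rfl, by omega⟩)

lemma Fseq_even {nX nY X : ℕ} (h : X % 2 = 0) (c g : ℕ → ℕ) : Fseq nX nY X c g = c 0 := by
  have h1 : X ≠ 1 := by omega
  simp [Fseq, h1, h]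

lemma Fseq_odd {nX nY X : ℕ} (h : X % 2 = 1) (h1 : X ≠ 1) (c g : ℕ → ℕ) :
    Fseq nX nY X c g = g (X - 1) := by
  simp [Fseq, h1, show ¬ X % 2 = 0 by omega]

lemma Fseq_one {nX nY : ℕ} (c g : ℕ → ℕ) :
    Fseq nX nY 1 c g = if c 0 = 0 then 0 else bI (¬ Bcond nX nY g) := rfl

lemma Bcond_imp {nX nY : ℕ} (hle : nY ≤ nX) {g h : ℕ → ℕ}
    (hX : ∀ j, j ≤ nX → g (2 * j) = h (2 * j))
    (hY : ∀ j, 1 ≤ j → j ≤ nY → g (2 * j + 1) = h (2 * j + 1)) :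
    Bcond nX nY g → Bcond nX nY h := by
  have h0 : g 0 = h 0 := hX 0 (by omega)
  unfold Bcond
  simp only [Finset.mem_Icc]
  rintro (⟨e0, (⟨hlt, hz⟩ | ⟨j, ⟨hj1, hj2⟩, a, b⟩)⟩ | ⟨e0, j, ⟨hj1, hj2⟩, hne⟩)
  · exact Or.inl ⟨h0 ▸ e0, Or.inl ⟨hlt, (hX nX le_rfl) ▸ hz⟩⟩
  · exact Or.inl ⟨h0 ▸ e0, Or.inr ⟨j, ⟨hj1, hj2⟩, (hX j (by omega)) ▸ a, (hY j hj1 hj2) ▸ b⟩⟩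
  · exact Or.inr ⟨h0 ▸ e0, j, ⟨hj1, hj2⟩, by rw [← hX j (by omega), ← hY j hj1 hj2]; exact hne⟩

lemma Bcond_congr {nX nY : ℕ} (hle : nY ≤ nX) {g h : ℕ → ℕ}
    (hX : ∀ j, j ≤ nX → g (2 * j) = h (2 * j))
    (hY : ∀ j, 1 ≤ j → j ≤ nY → g (2 * j + 1) = h (2 * j + 1)) :
    Bcond nX nY g ↔ Bcond nX nY h :=
  ⟨Bcond_imp hle hX hY, Bcond_imp hle (fun j hj => (hX j hj).symm) (fun j a b => (hY j a b).symm)⟩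

lemma Fseq_one_congr {nX nY : ℕ} {g h : ℕ → ℕ} (c : ℕ → ℕ) (hle : nY ≤ nX)
    (hag : ∀ Y ∈ Vseq nX nY, Y ≠ 1 → g Y = h Y) :
    Fseq nX nY 1 c g = Fseq nX nY 1 c h := by
  rw [Fseq_one, Fseq_one]
  by_cases hc : c 0 = 0
  · simp [hc]
  · rw [if_neg hc, if_neg hc]
    have hX : ∀ j, j ≤ nX → g (2 * j) = h (2 * j) := fun j hj =>
      hag _ (mem_Vseq.mpr (Or.inl ⟨by omega, by omega⟩)) (by omega)
    have hY : ∀ j, 1 ≤ j → j ≤ nY → g (2 * j + 1) = h (2 * j + 1) := fun j a b =>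
      hag _ (mem_Vseq.mpr (Or.inr ⟨by omega, by omega⟩)) (by omega)
    have hiff := Bcond_congr hle hX hY
    by_cases hb : Bcond nX nY g
    · rw [bI, bI, if_neg (by simpa using hb), if_neg (by simp [← hiff, hb])]
    · rw [bI, bI, if_pos (by simpa using hb), if_pos (by simp [← hiff, hb])]

lemma isSol_iff {nX nY : ℕ} (hle : nY ≤ nX) (I : ℕ → Option ℕ) (c v : ℕ → ℕ) :
    IsSol ((⟨Vseq nX nY, Fseq nX nY⟩ : CM).intervene I) c v ↔ v = theSol nX nY I c := by
  constructor
  · rintro ⟨h1, h2⟩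
    replace h1 : ∀ X ∈ Vseq nX nY, v X = (I X).getD (Fseq nX nY X c v) := h1
    replace h2 : ∀ X, X ∉ Vseq nX nY → v X = 0 := h2
    have hpre : ∀ Y ∈ Vseq nX nY, Y ≠ 1 → v Y = preSol I c Y := by
      intro Y hY hY1
      rcases mem_Vseq.mp hY with ⟨he, hle'⟩ | ⟨ho, hle'⟩
      · have hv := h1 Y hY
        rw [Fseq_even he] at hv
        rw [hv, preSol, if_pos he]
      · have hY3 : 2 ≤ Y := by omega
        have hv := h1 Y hY
        rw [Fseq_odd ho hY1] at hv
        have hprev : Y - 1 ∈ Vseq nX nY := mem_Vseq.mpr (Or.inl ⟨by omega, by omega⟩)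
        have hv' := h1 (Y - 1) hprev
        rw [Fseq_even (by omega)] at hv'
        rw [hv, hv', preSol, if_neg (by omega)]
    funext X
    by_cases hX : X ∈ Vseq nX nY
    · by_cases hX1 : X = 1
      · subst hX1
        have hv := h1 1 hX
        rw [Fseq_one_congr c hle hpre] at hv
        rw [hv, theSol, if_pos hX, if_pos rfl]
      · rw [theSol, if_pos hX, if_neg hX1]; exact hpre X hX hX1
    · rw [theSol, if_neg hX]; exact h2 X hX
  · rintro rfl
    constructor
    · intro X hX
      replace hX : X ∈ Vseq nX nY := hX
      show theSol nX nY I c X = (I X).getD (Fseq nX nY X c (theSol nX nY I c))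
      have hag : ∀ Y ∈ Vseq nX nY, Y ≠ 1 → theSol nX nY I c Y = preSol I c Y := by
        intro Y hY hY1; rw [theSol, if_pos hY, if_neg hY1]
      by_cases hX1 : X = 1
      · subst hX1
        rw [theSol, if_pos hX, if_pos rfl, Fseq_one_congr c hle hag]
      · rcases mem_Vseq.mp hX with ⟨he, hle'⟩ | ⟨ho, hle'⟩
        · rw [hag X hX hX1, Fseq_even he, preSol, if_pos he]
        · have hY3 : 2 ≤ X := by omega
          have hprev : X - 1 ∈ Vseq nX nY := mem_Vseq.mpr (Or.inl ⟨by omega, by omega⟩)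
          rw [hag X hX hX1, Fseq_odd ho hX1, hag (X-1) hprev (by omega), preSol,
            if_neg (by omega), preSol, if_pos (by omega)]
    · intro X hX
      replace hX : X ∉ Vseq nX nY := hX
      show theSol nX nY I c X = 0
      rw [theSol, if_neg hX]

end AuxDev

section AuxDev2

lemma bI_congr {p q : Prop} (h : p ↔ q) : bI p = bI q := by
  unfold bI; exact if_congr h rfl rfl

lemma sat_iff {nX nY : ℕ} (hle : nY ≤ nX) (c : ℕ → ℕ) (I : ℕ → Option ℕ) (X x : ℕ) :
    Sat ⟨Vseq nX nY, Fseq nX nY⟩ c I X x ↔ theSol nX nY I c X = x := by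
  constructor
  · intro h; exact h _ ((isSol_iff hle I c _).mpr rfl)
  · intro h v hv; rw [(isSol_iff hle I c v).mp hv]; exact h

lemma satF_iff {nX nY : ℕ} (hle : nY ≤ nX) (c : ℕ → ℕ) (I : ℕ → Option ℕ) (φ : BForm) :
    SatF ⟨Vseq nX nY, Fseq nX nY⟩ c I φ ↔ φ.eval (theSol nX nY I c) := by
  constructor
  · intro h; exact h _ ((isSol_iff hle I c _).mpr rfl)
  · intro h v hv; rw [(isSol_iff hle I c v).mp hv]; exact h

lemma theSol_one {nX nY : ℕ} (I : ℕ → Option ℕ) (c : ℕ → ℕ) :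
    theSol nX nY I c 1 = (I 1).getD (Fseq nX nY 1 c (preSol I c)) := by
  rw [theSol, if_pos one_mem_Vseq, if_pos rfl]

lemma theSol_mem {nX nY X : ℕ} (hX : X ∈ Vseq nX nY) (h1 : X ≠ 1) (I : ℕ → Option ℕ)
    (c : ℕ → ℕ) : theSol nX nY I c X = preSol I c X := by
  rw [theSol, if_pos hX, if_neg h1]

lemma theSol_none_eq_one {nX nY : ℕ} {X : ℕ} (hX : X ∈ Vseq nX nY) :
    theSol nX nY (fun _ => none) (fun _ => 1) X = 1 := by
  have hp : preSol (fun _ => none) (fun _ => (1:ℕ)) = fun _ => 1 := by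
    funext Y; rw [preSol]; split <;> rfl
  by_cases h1 : X = 1
  · subst h1
    rw [theSol_one, Option.getD_none, hp, Fseq_one, if_neg (by norm_num), bI_eq_one]
    rintro (⟨h, -⟩ | ⟨-, j, -, hne⟩)
    · exact one_ne_zero h
    · exact hne rfl
  · rw [theSol_mem hX h1, hp]

lemma Fseq_step1 (n : ℕ) (c p : ℕ → ℕ) (hp : p (2 * (n + 1)) = c 0) :
    Fseq n n 1 c p = Fseq (n + 1) n 1 c p := by
  rw [Fseq_one, Fseq_one]
  by_cases hc : c 0 = 0
  · simp [hc]
  · rw [if_neg hc, if_neg hc]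
    apply bI_congr; apply not_congr
    have h2 : p (2 * (n + 1)) ≠ 0 := by rw [hp]; exact hc
    unfold Bcond
    constructor
    · rintro (⟨e0, (⟨hlt, -⟩ | hj)⟩ | h)
      · omega
      · exact Or.inl ⟨e0, Or.inr hj⟩
      · exact Or.inr h
    · rintro (⟨e0, (⟨-, hz⟩ | hj)⟩ | h)
      · exact absurd hz h2
      · exact Or.inl ⟨e0, Or.inr hj⟩
      · exact Or.inr h

lemma Fseq_step2 (n : ℕ) (c p : ℕ → ℕ) (hp : p (2 * (n + 1) + 1) = p (2 * (n + 1))) :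
    Fseq (n + 1) n 1 c p = Fseq (n + 1) (n + 1) 1 c p := by
  rw [Fseq_one, Fseq_one]
  by_cases hc : c 0 = 0
  · simp [hc]
  · rw [if_neg hc, if_neg hc]
    apply bI_congr; apply not_congr
    unfold Bcond
    simp only [Finset.mem_Icc]
    constructor
    · rintro (⟨e0, (⟨-, hz⟩ | ⟨j, ⟨hj1, hj2⟩, a, b⟩)⟩ | ⟨e0, j, ⟨hj1, hj2⟩, hne⟩)
      · exact Or.inl ⟨e0, Or.inr ⟨n + 1, ⟨by omega, le_rfl⟩, hz, by rw [hp]; exact hz⟩⟩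
      · exact Or.inl ⟨e0, Or.inr ⟨j, ⟨hj1, by omega⟩, a, b⟩⟩
      · exact Or.inr ⟨e0, j, ⟨hj1, by omega⟩, hne⟩
    · rintro (⟨e0, (⟨h, -⟩ | ⟨j, ⟨hj1, hj2⟩, a, b⟩)⟩ | ⟨e0, j, ⟨hj1, hj2⟩, hne⟩)
      · omega
      · by_cases hj : j = n + 1
        · subst hj; exact Or.inl ⟨e0, Or.inl ⟨by omega, a⟩⟩
        · exact Or.inl ⟨e0, Or.inr ⟨j, ⟨hj1, by omega⟩, a, b⟩⟩
      · by_cases hj : j = n + 1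
        · subst hj; exact absurd hp (by tauto)
        · exact Or.inr ⟨e0, j, ⟨hj1, by omega⟩, hne⟩

end AuxDev2

/-- each model in the sequence M₀, M₁, M₂, … is a conservative
extension of its predecessor; in context u₁, A = 1 is not an actual cause of
B = 1 in M_{2n} but is an actual cause of B = 1 in M_{2n+1}. -/
theorem alternating_causality (n : ℕ) :
    ConsExt (Meven n) (Modd n) ∧ ConsExt (Modd n) (Meven (n + 1)) ∧
    ¬ IsCause (Meven n) (fun _ => 1) {0} (fun _ => 1) (.prim 1 1) ∧
    IsCause (Modd n) (fun _ => 1) {0} (fun _ => 1) (.prim 1 1) := by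
  refine ⟨⟨?_, ?_⟩, ⟨?_, ?_⟩, ?_, ?_⟩
  · -- Vseq n n ⊆ Vseq (n+1) n
    intro X hX; simp only [Meven, Modd] at hX ⊢; rw [mem_Vseq] at hX ⊢; omega
  · intro c x X hX w
    simp only [Meven, Modd] at *
    set I := doSet ((Vseq n n).erase X) w with hIdef
    rw [sat_iff le_rfl, sat_iff (Nat.le_succ n)]
    have hXV' : X ∈ Vseq (n + 1) n := by rw [mem_Vseq] at hX ⊢; omega
    have hI : I (2 * (n + 1)) = none := by
      rw [hIdef, doSet, if_neg]
      intro h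
      have := Finset.mem_of_mem_erase h
      rw [mem_Vseq] at this; omega
    have key : theSol n n I c X = theSol (n + 1) n I c X := by
      by_cases h1 : X = 1
      · subst h1
        rw [theSol_one, theSol_one, Fseq_step1 n c _ (by rw [preSol, if_pos (by omega), hI]; rfl)]
      · rw [theSol_mem hX h1, theSol_mem hXV' h1]
    rw [key]
  · -- Vseq (n+1) n ⊆ Vseq (n+1) (n+1)
    intro X hX; simp only [Meven, Modd] at hX ⊢; rw [mem_Vseq] at hX ⊢; omega
  · intro c x X hX w
    simp only [Meven, Modd] at *
    set I := doSet ((Vseq (n + 1) n).erase X) w with hIdef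
    rw [sat_iff (Nat.le_succ n), sat_iff le_rfl]
    have hXV' : X ∈ Vseq (n + 1) (n + 1) := by rw [mem_Vseq] at hX ⊢; omega
    have hI : I (2 * (n + 1) + 1) = none := by
      rw [hIdef, doSet, if_neg]
      intro h
      have := Finset.mem_of_mem_erase h
      rw [mem_Vseq] at this; omega
    have key : theSol (n + 1) n I c X = theSol (n + 1) (n + 1) I c X := by
      by_cases h1 : X = 1
      · subst h1
        rw [theSol_one, theSol_one, Fseq_step2 n c _ ?_]
        rw [preSol, if_neg (by omega), hI, Option.getD_none, preSol, if_pos (by omega)]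
        rfl
      · rw [theSol_mem hX h1, theSol_mem hXV' h1]
    rw [key]
  · -- ¬ IsCause (Meven n)
    rintro ⟨⟨-, W, w, x', hW, hXs, ha, hb⟩, -⟩
    set c : ℕ → ℕ := fun _ => 1 with hc
    have hsol : IsSol (Meven n) c (theSol n n (fun _ => none) c) :=
      (isSol_iff le_rfl (fun _ => none) c _).mpr rfl
    set vsol := theSol n n (fun _ => none) c with hvsol
    simp only [Meven] at ha hb
    rw [satF_iff le_rfl] at ha
    simp only [BForm.eval] at ha
    set Ia := witI {0} x' W w with hIa
    have hkill : ∀ W' ⊆ W, ∀ Z' ⊆ Vseq n n \ W, (1:ℕ) ∉ W' → (1:ℕ) ∉ Z' →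
        Bcond n n (preSol (acbI {0} (fun _ => 1) Z' vsol W' w) c) → False := by
      intro W' hW' Z' hZ' h1W' h1Z' hB
      have hbb := hb vsol hsol W' hW' Z' hZ'
      rw [satF_iff le_rfl] at hbb
      simp only [BForm.eval] at hbb
      have hJ1 : acbI {0} (fun _ => (1:ℕ)) Z' vsol W' w 1 = none := by
        rw [acbI, if_neg (by simp), if_neg h1Z', if_neg h1W']
      rw [theSol_one, hJ1, Option.getD_none, Fseq_one, if_neg (by simp [hc])] at hbb
      exact (bI_eq_one.mp hbb) hB
    by_cases h1W : 1 ∈ W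
    · have e1 : theSol n n Ia c 1 = w 1 := by
        rw [theSol_one, hIa, witI, if_neg (by simp), if_pos h1W]; rfl
      have hbb := hb vsol hsol W subset_rfl ∅ (Finset.empty_subset _)
      rw [satF_iff le_rfl] at hbb
      simp only [BForm.eval] at hbb
      have hJ1 : acbI {0} (fun _ => (1:ℕ)) ∅ vsol W w 1 = some (w 1) := by
        rw [acbI, if_neg (by simp), if_neg (Finset.notMem_empty 1), if_pos h1W]
      rw [theSol_one, hJ1, Option.getD_some] at hbb
      exact ha (by rw [e1, hbb])
    · have hIa1 : Ia 1 = none := by rw [hIa, witI, if_neg (by simp), if_neg h1W]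
      rw [theSol_one, hIa1, Option.getD_none, Fseq_one, if_neg (by simp [hc])] at ha
      set p := preSol Ia c with hp
      have hC : Bcond n n p := by
        by_contra h; exact ha (bI_eq_one.mpr h)
      have p0 : p 0 = x' 0 := by
        rw [hp, preSol, if_pos (by omega), hIa, witI, if_pos (by simp)]; rfl
      have pe : ∀ j, 1 ≤ j → p (2*j) = if 2*j ∈ W then w (2*j) else 1 := by
        intro j hj
        rw [hp, preSol, if_pos (by omega), hIa, witI,
          if_neg (by simp only [Finset.mem_singleton]; omega)]
        split <;> rfl
      have po : ∀ j, 1 ≤ j → p (2*j+1) = if 2*j+1 ∈ W then w (2*j+1) else p (2*j) := by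
        intro j hj
        have inner : (Ia (2*j+1-1)).getD (c 0) = p (2*j) := by
          rw [show 2*j+1-1 = 2*j from rfl, hp, preSol, if_pos (by omega)]
        rw [hp, preSol, if_neg (by omega), inner, hIa, witI,
          if_neg (by simp only [Finset.mem_singleton]; omega)]
        split <;> rfl
      rcases hC with ⟨e0, ⟨hlt, -⟩ | ⟨j, hj, a, b⟩⟩ | ⟨e0, j, hj, hne⟩
      · omega
      · rw [Finset.mem_Icc] at hj
        have hjW : 2*j ∈ W := by
          by_contra h; rw [pe j hj.1, if_neg h] at a; exact one_ne_zero a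
        rw [pe j hj.1, if_pos hjW] at a
        by_cases hoW : 2*j+1 ∈ W
        · rw [po j hj.1, if_pos hoW] at b
          apply hkill {2*j+1} (Finset.singleton_subset_iff.mpr hoW) ∅ (Finset.empty_subset _)
            (by simp only [Finset.mem_singleton]; omega) (Finset.notMem_empty 1)
          right
          refine ⟨?_, j, Finset.mem_Icc.mpr hj, ?_⟩
          · rw [preSol, if_pos (by omega), acbI, if_pos (by simp)]; rfl
          · have q1 : preSol (acbI {0} (fun _ => (1:ℕ)) ∅ vsol {2*j+1} w) c (2*j) = 1 := by
              rw [preSol, if_pos (by omega), acbI,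
                if_neg (by simp only [Finset.mem_singleton]; omega),
                if_neg (Finset.notMem_empty _),
                if_neg (by simp only [Finset.mem_singleton]; omega)]; rfl
            have q2 : preSol (acbI {0} (fun _ => (1:ℕ)) ∅ vsol {2*j+1} w) c (2*j+1)
                = w (2*j+1) := by
              rw [preSol, if_neg (by omega), acbI,
                if_neg (by simp only [Finset.mem_singleton]; omega),
                if_neg (Finset.notMem_empty _), if_pos (Finset.mem_singleton_self _)]; rfl
            rw [q1, q2, b]; omega
        · rw [po j hj.1, if_neg hoW] at b
          apply hkill {2*j} (Finset.singleton_subset_iff.mpr hjW) {2*j+1}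
            (Finset.singleton_subset_iff.mpr (Finset.mem_sdiff.mpr
              ⟨mem_Vseq.mpr (Or.inr ⟨by omega, by omega⟩), hoW⟩))
            (by simp only [Finset.mem_singleton]; omega)
            (by simp only [Finset.mem_singleton]; omega)
          right
          refine ⟨?_, j, Finset.mem_Icc.mpr hj, ?_⟩
          · rw [preSol, if_pos (by omega), acbI, if_pos (by simp)]; rfl
          · have q1 : preSol (acbI {0} (fun _ => (1:ℕ)) {2*j+1} vsol {2*j} w) c (2*j)
                = w (2*j) := by
              rw [preSol, if_pos (by omega), acbI,
                if_neg (by simp only [Finset.mem_singleton]; omega),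
                if_neg (by simp only [Finset.mem_singleton]; omega),
                if_pos (Finset.mem_singleton_self _)]; rfl
            have q2 : preSol (acbI {0} (fun _ => (1:ℕ)) {2*j+1} vsol {2*j} w) c (2*j+1)
                = vsol (2*j+1) := by
              rw [preSol, if_neg (by omega), acbI,
                if_neg (by simp only [Finset.mem_singleton]; omega),
                if_pos (Finset.mem_singleton_self _)]; rfl
            have q3 : vsol (2*j+1) = 1 :=
              theSol_none_eq_one (mem_Vseq.mpr (Or.inr ⟨by omega, by omega⟩))
            rw [q1, q2, q3, a]; omega
      · rw [Finset.mem_Icc] at hj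
        have hoW : 2*j+1 ∈ W := by
          by_contra h; rw [po j hj.1, if_neg h] at hne; exact hne rfl
        rw [po j hj.1, if_pos hoW] at hne
        by_cases heW : 2*j ∈ W
        · rw [pe j hj.1, if_pos heW] at hne
          apply hkill {2*j, 2*j+1} (Finset.insert_subset heW
              (Finset.singleton_subset_iff.mpr hoW)) ∅ (Finset.empty_subset _)
            (by simp only [Finset.mem_insert, Finset.mem_singleton]; omega)
            (Finset.notMem_empty 1)
          right
          refine ⟨?_, j, Finset.mem_Icc.mpr hj, ?_⟩
          · rw [preSol, if_pos (by omega), acbI, if_pos (by simp)]; rfl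
          · have q1 : preSol (acbI {0} (fun _ => (1:ℕ)) ∅ vsol {2*j, 2*j+1} w) c (2*j)
                = w (2*j) := by
              rw [preSol, if_pos (by omega), acbI,
                if_neg (by simp only [Finset.mem_singleton]; omega),
                if_neg (Finset.notMem_empty _),
                if_pos (Finset.mem_insert_self _ _)]; rfl
            have q2 : preSol (acbI {0} (fun _ => (1:ℕ)) ∅ vsol {2*j, 2*j+1} w) c (2*j+1)
                = w (2*j+1) := by
              rw [preSol, if_neg (by omega), acbI,
                if_neg (by simp only [Finset.mem_singleton]; omega),
                if_neg (Finset.notMem_empty _),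
                if_pos (show 2*j+1 ∈ ({2*j, 2*j+1}:Finset ℕ) from
                  Finset.mem_insert_of_mem (Finset.mem_singleton_self _))]; rfl
            rw [q1, q2]; exact hne
        · rw [pe j hj.1, if_neg heW] at hne
          apply hkill {2*j+1} (Finset.singleton_subset_iff.mpr hoW) ∅ (Finset.empty_subset _)
            (by simp only [Finset.mem_singleton]; omega) (Finset.notMem_empty 1)
          right
          refine ⟨?_, j, Finset.mem_Icc.mpr hj, ?_⟩
          · rw [preSol, if_pos (by omega), acbI, if_pos (by simp)]; rfl
          · have q1 : preSol (acbI {0} (fun _ => (1:ℕ)) ∅ vsol {2*j+1} w) c (2*j) = 1 := by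
              rw [preSol, if_pos (by omega), acbI,
                if_neg (by simp only [Finset.mem_singleton]; omega),
                if_neg (Finset.notMem_empty _),
                if_neg (by simp only [Finset.mem_singleton]; omega)]; rfl
            have q2 : preSol (acbI {0} (fun _ => (1:ℕ)) ∅ vsol {2*j+1} w) c (2*j+1)
                = w (2*j+1) := by
              rw [preSol, if_neg (by omega), acbI,
                if_neg (by simp only [Finset.mem_singleton]; omega),
                if_neg (Finset.notMem_empty _), if_pos (Finset.mem_singleton_self _)]; rfl
            rw [q1, q2]; exact hne
  · -- IsCause (Modd n)
    set c : ℕ → ℕ := fun _ => 1 with hc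
    have hsol : IsSol (Modd n) c (theSol (n+1) n (fun _ => none) c) :=
      (isSol_iff (Nat.le_succ n) (fun _ => none) c _).mpr rfl
    set vsol := theSol (n+1) n (fun _ => none) c with hvsol
    have hvsone : ∀ X ∈ Vseq (n+1) n, vsol X = 1 := fun X hX => theSol_none_eq_one hX
    have hAC1 : AC1 (Modd n) c {0} (fun _ => 1) (.prim 1 1) := by
      intro v hv
      have hv' : v = vsol := (isSol_iff (Nat.le_succ n) (fun _ => none) c v).mp hv
      subst hv'
      constructor
      · intro X hXm
        rw [Finset.mem_singleton] at hXm; subst hXm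
        exact hvsone 0 (mem_Vseq.mpr (Or.inl (by omega)))
      · exact hvsone 1 one_mem_Vseq
    constructor
    · refine ⟨hAC1, {2*(n+1)}, fun _ => 0, fun _ => 0, ?_, ?_, ?_, ?_⟩
      · intro Y hY; rw [Finset.mem_singleton] at hY; subst hY
        show 2*(n+1) ∈ Vseq (n+1) n
        rw [mem_Vseq]; omega
      · intro Y hY; rw [Finset.mem_singleton] at hY; subst hY
        show (0:ℕ) ∈ Vseq (n+1) n \ {2*(n+1)}
        rw [Finset.mem_sdiff, mem_Vseq, Finset.mem_singleton]
        exact ⟨Or.inl (by omega), by omega⟩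
      · show SatF (Modd n) c (witI {0} (fun _ => 0) {2*(n+1)} (fun _ => 0)) (.not (.prim 1 1))
        simp only [Modd]
        rw [satF_iff (Nat.le_succ n)]
        simp only [BForm.eval]
        set Ia := witI {0} (fun _ => (0:ℕ)) {2*(n+1)} (fun _ => (0:ℕ)) with hIa
        have hIa1 : Ia 1 = none := by
          rw [hIa, witI, if_neg (by simp),
            if_neg (by simp only [Finset.mem_singleton]; omega)]
        rw [theSol_one, hIa1, Option.getD_none, Fseq_one, if_neg (by simp [hc])]
        intro hbi
        rw [bI_eq_one] at hbi
        apply hbi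
        left
        constructor
        · rw [preSol, if_pos (by omega), hIa, witI, if_pos (by simp)]; rfl
        · left
          refine ⟨by omega, ?_⟩
          rw [preSol, if_pos (by omega), hIa, witI,
            if_neg (by simp only [Finset.mem_singleton]; omega),
            if_pos (Finset.mem_singleton_self _)]
          rfl
      · intro vs hvs W' hW' Z' hZ'
        have hvs' : vs = vsol := (isSol_iff (Nat.le_succ n) (fun _ => none) c vs).mp hvs
        subst hvs'
        show SatF (Modd n) c (acbI {0} (fun _ => 1) Z' vsol W' (fun _ => 0)) (.prim 1 1)
        simp only [Modd]
        rw [satF_iff (Nat.le_succ n)]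
        simp only [BForm.eval]
        set J := acbI {0} (fun _ => (1:ℕ)) Z' vsol W' (fun _ => (0:ℕ)) with hJ
        by_cases h1Z : 1 ∈ Z'
        · have hJ1 : J 1 = some (vsol 1) := by
            rw [hJ, acbI, if_neg (by simp), if_pos h1Z]
          rw [theSol_one, hJ1, Option.getD_some]
          exact hvsone 1 one_mem_Vseq
        · have hJ1 : J 1 = none := by
            rw [hJ, acbI, if_neg (by simp), if_neg h1Z, if_neg]
            intro h
            have := hW' h
            rw [Finset.mem_singleton] at this; omega
          have hJeven : ∀ j, 1 ≤ j → j ≤ n → (J (2*j)).getD (c 0) = 1 := by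
            intro j h1 h2
            rw [hJ, acbI, if_neg (by simp only [Finset.mem_singleton]; omega)]
            by_cases hz : 2*j ∈ Z'
            · rw [if_pos hz, Option.getD_some]
              exact hvsone _ (mem_Vseq.mpr (Or.inl ⟨by omega, by omega⟩))
            · rw [if_neg hz, if_neg (fun h => by
                have := hW' h
                rw [Finset.mem_singleton] at this
                omega), Option.getD_none]
          have hqzero : preSol J c 0 = 1 := by
            rw [preSol, if_pos (by omega), hJ, acbI, if_pos (by simp)]; rfl
          have hqodd : ∀ j, 1 ≤ j → j ≤ n → preSol J c (2*j+1) = 1 := by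
            intro j h1 h2
            rw [preSol, if_neg (by omega), show 2*j+1-1 = 2*j from rfl, hJeven j h1 h2]
            by_cases hz : 2*j+1 ∈ Z'
            · rw [hJ, acbI, if_neg (by simp only [Finset.mem_singleton]; omega), if_pos hz,
                Option.getD_some]
              exact hvsone _ (mem_Vseq.mpr (Or.inr ⟨by omega, by omega⟩))
            · rw [hJ, acbI, if_neg (by simp only [Finset.mem_singleton]; omega), if_neg hz,
                if_neg (fun h => by
                  have := hW' h
                  rw [Finset.mem_singleton] at this
                  omega), Option.getD_none]
          rw [theSol_one, hJ1, Option.getD_none, Fseq_one, if_neg (by simp [hc]), bI_eq_one]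
          rintro (⟨h0, -⟩ | ⟨-, j, hj, hne⟩)
          · rw [hqzero] at h0; exact one_ne_zero h0
          · rw [Finset.mem_Icc] at hj
            apply hne
            have e1 : preSol J c (2*j) = 1 := by
              rw [preSol, if_pos (by omega)]; exact hJeven j hj.1 hj.2
            rw [e1, hqodd j hj.1 hj.2]
    · intro Xs' hXs'
      have hempty : Xs' = ∅ := Finset.ssubset_singleton_iff.mp hXs'
      subst hempty
      rintro ⟨-, W, w, x', hWsub, -, ha, hb⟩
      simp only [Modd] at ha hb
      have hbb := hb vsol hsol W subset_rfl ∅ (Finset.empty_subset _)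
      have heq : acbI ∅ (fun _ => (1:ℕ)) ∅ vsol W w = witI ∅ x' W w := by
        funext Y; rw [acbI, witI]; simp
      rw [heq] at hbb
      rw [satF_iff (Nat.le_succ n)] at ha hbb
      simp only [BForm.eval] at ha hbb
      exact ha hbb
end
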